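/- Fix integers $m \ge 2$ and $n_1, \dots, n_m \ge 2$. Set $\mathcal{N} = n_1 \cdots n_m$, $\mathcal{N}_i = \mathcal{N}/n_i$, and $s = \gcd(\mathcal{N}_1, \dots, \mathcal{N}_m)$. Let $C = \{ y \in \mathbb{C}^m : y_1^{n_1} = y_i^{n_i} \text{ for } i = 2, \dots, m \}$ and $G = C \setminus \{0\}$. Then: (a) every $y \in G$ has all coordinates nonzero, so $G \subseteq (\mathbb{C}^\times)^m$; (b) $G$ is a subgroup of $(\mathbb{C}^\times)^m$ under coordinatewise multiplication; and (c) the connected component of the identity $(1, \dots, 1)$ in $G$ (with the subspace topology from $\mathbb{C}^m$) is exactly the one-parameter subgroup $T = \{ (u^{\mathcal{N}_1/s}, \dots, u^{\mathcal{N}_m/s}) : u \in \mathbb{C}^\times \}$. -/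

import Mathlib

open Complex Filter Topology

/-- An `n`-th root of unity close enough to `1` is `1`. -/
lemma root_isolated_aux (n : ℕ) (hn : 0 < n) :
    ∃ r > 0, ∀ z : ℂ, z ^ n = 1 → ‖z - 1‖ < r → z = 1 := by
  have hfin : {z : ℂ | z ^ n = 1 ∧ z ≠ 1}.Finite := by
    apply Set.Finite.subset (Polynomial.nthRoots n (1 : ℂ)).toFinset.finite_toSet
    intro z hz
    simp only [Finset.mem_coe, Multiset.mem_toFinset]
    rw [Polynomial.mem_nthRoots hn]
    exact hz.1
  have hcl : IsClosed {z : ℂ | z ^ n = 1 ∧ z ≠ 1} := hfin.isClosed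
  have h1 : (1 : ℂ) ∈ {z : ℂ | z ^ n = 1 ∧ z ≠ 1}ᶜ := by simp
  obtain ⟨r, hr, hball⟩ := Metric.isOpen_iff.mp hcl.isOpen_compl 1 h1
  refine ⟨r, hr, fun z hzn hznear => ?_⟩
  by_contra hne
  have hzb : z ∈ Metric.ball (1 : ℂ) r := by
    simpa [Metric.mem_ball, dist_eq_norm] using hznear
  exact (hball hzb) ⟨hzn, hne⟩

theorem curve_identity_component (m : ℕ) (hm : 2 ≤ m) (i0 : Fin m) (hi0 : (i0 : ℕ) = 0)
    (n : Fin m → ℕ) (hn : ∀ i, 2 ≤ n i)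
    (N : ℕ) (hN : N = ∏ i, n i)
    (s : ℕ) (hs : s = Finset.gcd Finset.univ (fun i => N / n i))
    (C : Set (Fin m → ℂ))
    (hC : C = {y | ∀ i, i ≠ i0 → y i0 ^ n i0 = y i ^ n i})
    (G : Set (Fin m → ℂ)) (hG : G = C \ {0})
    (T : Set (Fin m → ℂ))
    (hT : T = {y | ∃ u : ℂ, u ≠ 0 ∧ y = fun j => u ^ (N / n j / s)}) :
    (∀ y ∈ G, ∀ j, y j ≠ 0) ∧
    ((1 : Fin m → ℂ) ∈ G) ∧
    (∀ y ∈ G, ∀ z ∈ G, y * z ∈ G) ∧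
    (∀ y ∈ G, ∃ z ∈ G, y * z = 1) ∧
    connectedComponentIn G 1 = T := by
  -- basic numerics
  have hnpos : ∀ i, 0 < n i := fun i => lt_of_lt_of_le two_pos (hn i)
  have hNpos : 0 < N := by
    rw [hN]; exact Finset.prod_pos fun i _ => hnpos i
  have hdvd : ∀ j, n j ∣ N := by
    intro j; rw [hN]; exact Finset.dvd_prod_of_mem n (Finset.mem_univ j)
  have hsd : ∀ j, s ∣ N / n j := by
    intro j; rw [hs]; exact Finset.gcd_dvd (Finset.mem_univ j)
  have hNnj_pos : ∀ j, 0 < N / n j := fun j =>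
    Nat.div_pos (Nat.le_of_dvd hNpos (hdvd j)) (hnpos j)
  have hspos : 0 < s := by
    rcases Nat.eq_zero_or_pos s with h | h
    · exfalso
      have := hsd i0
      rw [h] at this
      exact absurd (Nat.eq_zero_of_zero_dvd this) (hNnj_pos i0).ne'
    · exact h
  have hsN : s ∣ N := (hsd i0).trans (Nat.div_dvd_of_dvd (hdvd i0))
  have hNspos : 0 < N / s := Nat.div_pos (Nat.le_of_dvd hNpos hsN) hspos
  set a : Fin m → ℕ := fun j => N / n j / s with ha
  have key : ∀ j, a j * n j = N / s := by
    intro j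
    have h1 : a j * s = N / n j := Nat.div_mul_cancel (hsd j)
    have h2 : N / n j * n j = N := Nat.div_mul_cancel (hdvd j)
    have h3 : a j * n j * s = N := by
      calc a j * n j * s = a j * s * n j := by ring
      _ = N / n j * n j := by rw [h1]
      _ = N := h2
    exact (Nat.div_eq_of_eq_mul_left hspos h3.symm).symm
  -- (a): all coordinates nonzero
  have hGnz : ∀ y ∈ G, ∀ j, y j ≠ 0 := by
    intro y hy j hj
    rw [hG] at hy
    obtain ⟨hyC, hy0⟩ := hy
    rw [hC] at hyC
    apply hy0
    have hzero : y i0 = 0 := by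
      by_cases hji : j = i0
      · rwa [hji] at hj
      · have h := hyC j hji
        rw [hj, zero_pow (hnpos j).ne'] at h
        exact pow_eq_zero_iff (hnpos i0).ne' |>.mp h
    have hall : ∀ i, y i = 0 := by
      intro i
      by_cases hii : i = i0
      · rw [hii]; exact hzero
      · have h := hyC i hii
        rw [hzero, zero_pow (hnpos i0).ne'] at h
        exact pow_eq_zero_iff (hnpos i).ne' |>.mp h.symm
    have : y = 0 := funext fun i => hall i
    simp [this]
  -- membership lemmas for G and T
  have hmemG : ∀ y : Fin m → ℂ, (∀ i, i ≠ i0 → y i0 ^ n i0 = y i ^ n i) → y i0 ≠ 0 → y ∈ G := by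
    intro y h1 h2
    rw [hG, hC]
    refine ⟨h1, ?_⟩
    intro h0
    rw [Set.mem_singleton_iff] at h0
    exact h2 (by rw [h0]; rfl)
  have hTsubG : T ⊆ G := by
    intro y hy
    rw [hT] at hy
    obtain ⟨u, hu, rfl⟩ := hy
    refine hmemG _ (fun i hi => ?_) (pow_ne_zero _ hu)
    show (u ^ a i0) ^ n i0 = (u ^ a i) ^ n i
    rw [← pow_mul, ← pow_mul, key i0, key i]
  have hT1 : (1 : Fin m → ℂ) ∈ T := by
    rw [hT]
    exact ⟨1, one_ne_zero, funext fun j => (one_pow _).symm⟩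
  have hG1 : (1 : Fin m → ℂ) ∈ G := hTsubG hT1
  have hGmul : ∀ y ∈ G, ∀ z ∈ G, y * z ∈ G := by
    intro y hy z hz
    have hyC : ∀ i, i ≠ i0 → y i0 ^ n i0 = y i ^ n i := by
      rw [hG, hC] at hy; exact hy.1
    have hzC : ∀ i, i ≠ i0 → z i0 ^ n i0 = z i ^ n i := by
      rw [hG, hC] at hz; exact hz.1
    refine hmemG _ (fun i hi => ?_) ?_
    · show (y i0 * z i0) ^ n i0 = (y i * z i) ^ n i
      rw [mul_pow, mul_pow, hyC i hi, hzC i hi]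
    · exact mul_ne_zero (hGnz y hy i0) (hGnz z hz i0)
  have hGdiv : ∀ y ∈ G, ∀ z ∈ G, (fun j => y j / z j) ∈ G := by
    intro y hy z hz
    have hyC : ∀ i, i ≠ i0 → y i0 ^ n i0 = y i ^ n i := by
      rw [hG, hC] at hy; exact hy.1
    have hzC : ∀ i, i ≠ i0 → z i0 ^ n i0 = z i ^ n i := by
      rw [hG, hC] at hz; exact hz.1
    refine hmemG _ (fun i hi => ?_) (div_ne_zero (hGnz y hy i0) (hGnz z hz i0))
    show (y i0 / z i0) ^ n i0 = (y i / z i) ^ n i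
    rw [div_pow, div_pow, hyC i hi, hzC i hi]
  have hTmul : ∀ y ∈ T, ∀ z ∈ T, y * z ∈ T := by
    intro y hy z hz
    rw [hT] at hy hz ⊢
    obtain ⟨u, hu, rfl⟩ := hy
    obtain ⟨v, hv, rfl⟩ := hz
    exact ⟨u * v, mul_ne_zero hu hv, funext fun j => by simp [mul_pow]⟩
  have hTdiv : ∀ y ∈ T, ∀ z ∈ T, (fun j => y j / z j) ∈ T := by
    intro y hy z hz
    rw [hT] at hy hz ⊢
    obtain ⟨u, hu, rfl⟩ := hy
    obtain ⟨v, hv, rfl⟩ := hz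
    exact ⟨u / v, div_ne_zero hu hv, funext fun j => by simp [div_pow]⟩
  -- key local lemma: near 1, G is contained in T
  have L1 : ∃ V ∈ 𝓝 (1 : Fin m → ℂ), ∀ y ∈ G, y ∈ V → y ∈ T := by
    choose r hr hroot using fun j => root_isolated_aux (n j) (hnpos j)
    set w : (Fin m → ℂ) → ℂ := fun y => y i0 ^ n i0 with hw
    set F : Fin m → (Fin m → ℂ) → ℂ :=
      fun j y => y j / Complex.exp (Complex.log (w y) / (n j : ℂ)) with hF
    have hcont : ∀ j, ContinuousAt (F j) 1 := by
      intro j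
      have hw1 : w (1 : Fin m → ℂ) = 1 := by simp [hw]
      have hwc : ContinuousAt w (1 : Fin m → ℂ) :=
        ((continuous_apply i0).pow (n i0)).continuousAt
      have hlog : ContinuousAt (fun y => Complex.log (w y)) 1 :=
        hwc.clog (hw1 ▸ Complex.one_mem_slitPlane)
      have hden : ContinuousAt (fun y => Complex.exp (Complex.log (w y) / (n j : ℂ))) 1 :=
        Complex.continuous_exp.continuousAt.comp (hlog.div_const _)
      apply ContinuousAt.div ((continuous_apply j).continuousAt) hden
      simp [hw1]
    have hF1 : ∀ j, F j 1 = 1 := by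
      intro j
      simp [hF, hw]
    refine ⟨⋂ j, F j ⁻¹' Metric.ball (1 : ℂ) (r j), ?_, ?_⟩
    · apply Filter.iInter_mem.mpr
      intro j
      apply (hcont j).preimage_mem_nhds
      rw [hF1 j]
      exact Metric.ball_mem_nhds _ (hr j)
    · intro y hyG hyV
      have hyC : ∀ i, i ≠ i0 → y i0 ^ n i0 = y i ^ n i := by
        rw [hG, hC] at hyG; exact hyG.1
      have hwy : w y ≠ 0 := pow_ne_zero _ (hGnz y hyG i0)
      have hpow : ∀ j, y j ^ n j = w y := by
        intro j
        by_cases hj : j = i0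
        · rw [hj]
        · exact (hyC j hj).symm
      have hzroot : ∀ j, (F j y) ^ n j = 1 := by
        intro j
        rw [hF]
        show (y j / Complex.exp (Complex.log (w y) / (n j : ℂ))) ^ n j = 1
        rw [div_pow, hpow j, ← Complex.exp_nat_mul,
          mul_div_cancel₀ _ (Nat.cast_ne_zero.mpr (hnpos j).ne' : (n j : ℂ) ≠ 0),
          Complex.exp_log hwy, div_self hwy]
      have hone : ∀ j, F j y = 1 := by
        intro j
        have hmem := Set.mem_iInter.mp hyV j
        rw [Set.mem_preimage, Metric.mem_ball, dist_eq_norm] at hmem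
        exact hroot j (F j y) (hzroot j) hmem
      set u : ℂ := Complex.exp (Complex.log (w y) / ((N / s : ℕ) : ℂ)) with hu
      have hupow : ∀ j, u ^ a j = Complex.exp (Complex.log (w y) / (n j : ℂ)) := by
        intro j
        rw [hu, ← Complex.exp_nat_mul]
        congr 1
        have hcast : (a j : ℂ) * (n j : ℂ) = ((N / s : ℕ) : ℂ) := by
          exact_mod_cast congrArg (Nat.cast : ℕ → ℂ) (key j)
        have hnj : (n j : ℂ) ≠ 0 := Nat.cast_ne_zero.mpr (hnpos j).ne'
        have hNs : ((N / s : ℕ) : ℂ) ≠ 0 := Nat.cast_ne_zero.mpr hNspos.ne'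
        rw [← mul_div_assoc, div_eq_div_iff hNs hnj, ← hcast]
        ring
      rw [hT]
      refine ⟨u, Complex.exp_ne_zero _, funext fun j => ?_⟩
      have := hone j
      rw [hF] at this
      have hden : Complex.exp (Complex.log (w y) / (n j : ℂ)) ≠ 0 := Complex.exp_ne_zero _
      have : y j = Complex.exp (Complex.log (w y) / (n j : ℂ)) := by
        field_simp at this
        exact this
      rw [this, hupow j]
  -- T is clopen in G
  obtain ⟨V, hV, hVT⟩ := L1
  have hdivmem : ∀ t ∈ G, (fun z : Fin m → ℂ => fun j => z j / t j) ⁻¹' V ∈ 𝓝 t := by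
    intro t htG
    have hft : (fun j => t j / t j) = (1 : Fin m → ℂ) :=
      funext fun j => div_self (hGnz t htG j)
    have hcont : Continuous (fun z : Fin m → ℂ => fun j => z j / t j) :=
      continuous_pi fun j => (continuous_apply (A := fun _ : Fin m => ℂ) j).div_const (t j)
    apply hcont.continuousAt.preimage_mem_nhds
    rw [hft]
    exact hV
  have hclopen : IsClopen (Subtype.val ⁻¹' T : Set G) := by
    constructor
    · -- closed
      rw [← isOpen_compl_iff]
      rw [isOpen_iff_mem_nhds]
      rintro ⟨t, htG⟩ htT
      rw [mem_nhds_subtype]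
      refine ⟨(fun z : Fin m → ℂ => fun j => z j / t j) ⁻¹' V, hdivmem t htG, ?_⟩
      rintro ⟨z, hzG⟩ hzV hzT
      have hzT' : z ∈ T := hzT
      have hdG : (fun j => z j / t j) ∈ G := hGdiv z hzG t htG
      have hdT : (fun j => z j / t j) ∈ T := hVT _ hdG hzV
      apply htT
      show t ∈ T
      have : t = fun j => z j / (z j / t j) := by
        funext j
        rw [div_div_cancel₀]
        exact hGnz z hzG j
      rw [this]
      exact hTdiv z hzT' _ hdT
    · -- open
      rw [isOpen_iff_mem_nhds]
      rintro ⟨t, htG⟩ htT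
      rw [mem_nhds_subtype]
      refine ⟨(fun z : Fin m → ℂ => fun j => z j / t j) ⁻¹' V, hdivmem t htG, ?_⟩
      rintro ⟨z, hzG⟩ hzV
      have htT' : t ∈ T := htT
      have hdG : (fun j => z j / t j) ∈ G := hGdiv z hzG t htG
      have hdT : (fun j => z j / t j) ∈ T := hVT _ hdG hzV
      show z ∈ T
      have : z = (fun j => z j / t j) * t := by
        funext j
        show z j = z j / t j * t j
        rw [div_mul_cancel₀]
        exact hGnz t htG j
      rw [this]
      exact hTmul _ hdT t htT'
  -- T is preconnected
  have hTconn : IsPreconnected T := by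
    have himg : T = (fun u : ℂ => fun j => u ^ a j) '' {0}ᶜ := by
      rw [hT]
      ext y
      simp only [Set.mem_image, Set.mem_compl_iff, Set.mem_singleton_iff, Set.mem_setOf_eq]
      constructor
      · rintro ⟨u, hu, rfl⟩; exact ⟨u, hu, rfl⟩
      · rintro ⟨u, hu, rfl⟩; exact ⟨u, hu, rfl⟩
    rw [himg]
    have hrank : 1 < Module.rank ℝ ℂ := by
      rw [Complex.rank_real_complex]
      norm_num
    have hconn : IsConnected ({0}ᶜ : Set ℂ) :=
      isConnected_compl_singleton_of_one_lt_rank hrank 0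
    exact hconn.isPreconnected.image _
      (continuous_pi fun j => continuous_pow (a j)).continuousOn
  -- conclude
  refine ⟨hGnz, hG1, hGmul, ?_, ?_⟩
  · intro y hy
    refine ⟨fun j => (y j)⁻¹, ?_, ?_⟩
    · have hyC : ∀ i, i ≠ i0 → y i0 ^ n i0 = y i ^ n i := by
        rw [hG, hC] at hy; exact hy.1
      refine hmemG _ (fun i hi => ?_) (inv_ne_zero (hGnz y hy i0))
      show (y i0)⁻¹ ^ n i0 = (y i)⁻¹ ^ n i
      rw [inv_pow, inv_pow, hyC i hi]
    · funext j
      exact mul_inv_cancel₀ (hGnz y hy j)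
  · apply Set.Subset.antisymm
    · rw [connectedComponentIn_eq_image hG1]
      rintro x ⟨p, hp, rfl⟩
      have h1T : (⟨1, hG1⟩ : G) ∈ (Subtype.val ⁻¹' T : Set G) := hT1
      exact hclopen.connectedComponent_subset h1T hp
    · exact hTconn.subset_connectedComponentIn hT1 hTsubG
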